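/- Let d ≥ 1, let ϑ : ℝ^d → ℂ be a Schwartz function, let t > 0, and let u ∈ L²(ℝ^d). Define γ(t, v) = ∫_{ℝ^d} u(x) conj(Ψ_v(t, x)) dx. Then v ↦ γ(t, v) belongs to L²(ℝ^d) and ‖γ(t, ·)‖_{L²(ℝ^d)} ≤ 2^{−d/2} ‖ϑ‖_{L¹(ℝ^d)} ‖u‖_{L²(ℝ^d)}; in particular ‖γ(t,·)‖_{L²_v} ≲ ‖u‖_{L²_x} with a constant depending only on d and ϑ. -/

import Mathlib

open MeasureTheory ENNReal

/-- The wavepacket with velocity `v`: `Ψ_v(t,x) = e^{i|x|²/(4t)} ϑ((x − 2tv)/t^{1/2})`. -/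
noncomputable def wavePacket {d : ℕ} (ϑ : SchwartzMap (EuclideanSpace ℝ (Fin d)) ℂ)
    (v : EuclideanSpace ℝ (Fin d)) (t : ℝ) (x : EuclideanSpace ℝ (Fin d)) : ℂ :=
  Complex.exp (Complex.I * ((‖x‖ ^ 2 / (4 * t) : ℝ) : ℂ)) *
    ϑ ((Real.sqrt t)⁻¹ • (x - (2 * t) • v))

/-- `γ(t, v) = ∫ u(x) conj(Ψ_v(t,x)) dx`. -/
noncomputable def gam {d : ℕ} (ϑ : SchwartzMap (EuclideanSpace ℝ (Fin d)) ℂ)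
    (t : ℝ) (u : EuclideanSpace ℝ (Fin d) → ℂ) (v : EuclideanSpace ℝ (Fin d)) : ℂ :=
  ∫ x, u x * (starRingEnd ℂ) (wavePacket ϑ v t x)

section Aux

variable {d : ℕ}

lemma lint_smul (f : EuclideanSpace ℝ (Fin d) → ℝ≥0∞) (hf : Measurable f) {R : ℝ} (hR : R ≠ 0) :
    ∫⁻ x, f (R • x) = ENNReal.ofReal |(R ^ d)|⁻¹ * ∫⁻ x, f x := by
  rw [← lintegral_map hf (measurable_const_smul R),
    Measure.map_addHaar_smul (volume : Measure (EuclideanSpace ℝ (Fin d))) hR,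
    lintegral_smul_measure, finrank_euclideanSpace_fin, abs_inv, smul_eq_mul]

variable (ϑ : SchwartzMap (EuclideanSpace ℝ (Fin d)) ℂ) {t : ℝ}

/-- inner integral in x -/
lemma intA (ht : 0 < t) (v : EuclideanSpace ℝ (Fin d)) :
    ∫⁻ x, (‖ϑ ((Real.sqrt t)⁻¹ • (x - (2 * t) • v))‖₊ : ℝ≥0∞)
      = ENNReal.ofReal (Real.sqrt t ^ d) * ∫⁻ x, (‖ϑ x‖₊ : ℝ≥0∞) := by
  have hs : Real.sqrt t ≠ 0 := by positivity
  have hmeas : Measurable fun y : EuclideanSpace ℝ (Fin d) => (‖ϑ y‖₊ : ℝ≥0∞) :=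
    ϑ.continuous.measurable.enorm
  calc ∫⁻ x, (‖ϑ ((Real.sqrt t)⁻¹ • (x - (2 * t) • v))‖₊ : ℝ≥0∞)
      = ∫⁻ x, (fun y => (‖ϑ ((Real.sqrt t)⁻¹ • y)‖₊ : ℝ≥0∞)) (x + -((2 * t) • v)) := by
        simp [sub_eq_add_neg]
    _ = ∫⁻ x, (‖ϑ ((Real.sqrt t)⁻¹ • x)‖₊ : ℝ≥0∞) :=
        lintegral_add_right_eq_self (fun y => (‖ϑ ((Real.sqrt t)⁻¹ • y)‖₊ : ℝ≥0∞)) (-((2 * t) • v))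
    _ = ENNReal.ofReal |((Real.sqrt t)⁻¹ ^ d)|⁻¹ * ∫⁻ x, (‖ϑ x‖₊ : ℝ≥0∞) :=
        lint_smul _ hmeas (inv_ne_zero hs)
    _ = ENNReal.ofReal (Real.sqrt t ^ d) * ∫⁻ x, (‖ϑ x‖₊ : ℝ≥0∞) := by
        rw [inv_pow, abs_inv, inv_inv, abs_of_nonneg (by positivity)]

/-- inner integral in v -/
lemma intB (ht : 0 < t) (x : EuclideanSpace ℝ (Fin d)) :
    ∫⁻ v, (‖ϑ ((Real.sqrt t)⁻¹ • (x - (2 * t) • v))‖₊ : ℝ≥0∞)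
      = ENNReal.ofReal ((2 * Real.sqrt t)⁻¹ ^ d) * ∫⁻ x, (‖ϑ x‖₊ : ℝ≥0∞) := by
  have hs : Real.sqrt t ≠ 0 := by positivity
  have hkey : ∀ v : EuclideanSpace ℝ (Fin d),
      (Real.sqrt t)⁻¹ • (x - (2 * t) • v) = (-(2 * Real.sqrt t)) • v + (Real.sqrt t)⁻¹ • x := by
    intro v
    rw [smul_sub, smul_smul, sub_eq_neg_add, ← neg_smul]
    congr 2
    rw [← Real.mul_self_sqrt ht.le]
    field_simp
    rw [Real.sqrt_sq (Real.sqrt_nonneg t)]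
  have hmeas : Measurable fun y : EuclideanSpace ℝ (Fin d) =>
      (‖ϑ (y + (Real.sqrt t)⁻¹ • x)‖₊ : ℝ≥0∞) :=
    (ϑ.continuous.comp (continuous_id.add continuous_const)).measurable.enorm
  calc ∫⁻ v, (‖ϑ ((Real.sqrt t)⁻¹ • (x - (2 * t) • v))‖₊ : ℝ≥0∞)
      = ∫⁻ v, (fun y => (‖ϑ (y + (Real.sqrt t)⁻¹ • x)‖₊ : ℝ≥0∞)) ((-(2 * Real.sqrt t)) • v) := by
        simp only [hkey]
    _ = ENNReal.ofReal |((-(2 * Real.sqrt t)) ^ d)|⁻¹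
          * ∫⁻ y, (‖ϑ (y + (Real.sqrt t)⁻¹ • x)‖₊ : ℝ≥0∞) :=
        lint_smul _ hmeas (neg_ne_zero.mpr (by positivity))
    _ = ENNReal.ofReal ((2 * Real.sqrt t)⁻¹ ^ d) * ∫⁻ x, (‖ϑ x‖₊ : ℝ≥0∞) := by
        rw [lintegral_add_right_eq_self (fun y => (‖ϑ y‖₊ : ℝ≥0∞)) _, abs_pow, abs_neg,
          abs_of_nonneg (by positivity), ← inv_pow]

/-- Cauchy-Schwarz for lintegrals, squared form. -/
lemma cs_step {α : Type*} [MeasurableSpace α] (μ : Measure α) (W K : α → ℝ≥0∞)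
    (hW : AEMeasurable W μ) (hK : AEMeasurable K μ) :
    (∫⁻ x, W x * K x ∂μ) ^ (2 : ℝ)
      ≤ (∫⁻ x, W x ^ (2 : ℝ) * K x ∂μ) * ∫⁻ x, K x ∂μ := by
  have h2 : (2 : ℝ).HolderConjugate 2 := Real.HolderConjugate.two_two
  have hf : AEMeasurable (fun x => W x * K x ^ (1 / 2 : ℝ)) μ := hW.mul (hK.pow_const _)
  have hg : AEMeasurable (fun x => K x ^ (1 / 2 : ℝ)) μ := hK.pow_const _
  have hH := ENNReal.lintegral_mul_le_Lp_mul_Lq μ h2 hf hg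
  simp only [Pi.mul_apply] at hH
  have e1 : ∫⁻ x, (W x * K x ^ (1 / 2 : ℝ)) * K x ^ (1 / 2 : ℝ) ∂μ = ∫⁻ x, W x * K x ∂μ := by
    refine lintegral_congr fun x => ?_
    rw [mul_assoc, ← ENNReal.rpow_add_of_nonneg _ _ (by norm_num) (by norm_num)]
    norm_num
  have e2 : ∫⁻ x, (W x * K x ^ (1 / 2 : ℝ)) ^ (2 : ℝ) ∂μ = ∫⁻ x, W x ^ (2 : ℝ) * K x ∂μ := by
    refine lintegral_congr fun x => ?_
    rw [ENNReal.mul_rpow_of_nonneg _ _ (by norm_num : (0:ℝ) ≤ 2), ← ENNReal.rpow_mul]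
    norm_num
  have e3 : ∫⁻ x, (K x ^ (1 / 2 : ℝ)) ^ (2 : ℝ) ∂μ = ∫⁻ x, K x ∂μ := by
    refine lintegral_congr fun x => ?_
    rw [← ENNReal.rpow_mul]; norm_num
  rw [e1, e2, e3] at hH
  calc (∫⁻ x, W x * K x ∂μ) ^ (2 : ℝ)
      ≤ ((∫⁻ x, W x ^ (2 : ℝ) * K x ∂μ) ^ (1 / 2 : ℝ)
          * (∫⁻ x, K x ∂μ) ^ (1 / 2 : ℝ)) ^ (2 : ℝ) :=
        ENNReal.rpow_le_rpow hH (by norm_num)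
    _ = (∫⁻ x, W x ^ (2 : ℝ) * K x ∂μ) * ∫⁻ x, K x ∂μ := by
        rw [ENNReal.mul_rpow_of_nonneg _ _ (by norm_num : (0:ℝ) ≤ 2),
          ← ENNReal.rpow_mul, ← ENNReal.rpow_mul]
        norm_num

end Aux

set_option maxHeartbeats 1000000 in
/-- For `u ∈ L²`, `γ(t,·) ∈ L²_v` with `‖γ(t,·)‖_{L²} ≤ 2^{−d/2} ‖ϑ‖_{L¹} ‖u‖_{L²}`. -/
theorem stmt8 (d : ℕ) (hd : 1 ≤ d) (ϑ : SchwartzMap (EuclideanSpace ℝ (Fin d)) ℂ)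
    (t : ℝ) (ht : 0 < t) (u : EuclideanSpace ℝ (Fin d) → ℂ)
    (hu : MemLp u 2 volume) :
    MemLp (fun v => gam ϑ t u v) 2 volume ∧
      (eLpNorm (fun v => gam ϑ t u v) 2 volume).toReal
        ≤ (2 : ℝ) ^ (-(d : ℝ) / 2) * (∫ x, ‖ϑ x‖) * (eLpNorm u 2 volume).toReal := by
  classical
  have hs : Real.sqrt t ≠ 0 := by positivity
  set I : ℝ≥0∞ := ∫⁻ x, (‖ϑ x‖₊ : ℝ≥0∞) with hI
  have hIlt : I < ⊤ := ϑ.integrable.2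
  set K : EuclideanSpace ℝ (Fin d) → EuclideanSpace ℝ (Fin d) → ℝ≥0∞ :=
    fun v x => (‖ϑ ((Real.sqrt t)⁻¹ • (x - (2 * t) • v))‖₊ : ℝ≥0∞) with hK
  set A : ℝ≥0∞ := ENNReal.ofReal (Real.sqrt t ^ d) * I with hAdef
  set B : ℝ≥0∞ := ENNReal.ofReal ((2 * Real.sqrt t)⁻¹ ^ d) * I with hBdef
  have hAne : A ≠ ⊤ := ENNReal.mul_ne_top ENNReal.ofReal_ne_top hIlt.ne
  have hBne : B ≠ ⊤ := ENNReal.mul_ne_top ENNReal.ofReal_ne_top hIlt.ne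
  have hA : ∀ v, ∫⁻ x, K v x = A := fun v => intA ϑ ht v
  have hB : ∀ x, ∫⁻ v, K v x = B := fun x => intB ϑ ht x
  -- joint continuity / measurability of the kernel
  have hKc : Continuous fun p : EuclideanSpace ℝ (Fin d) × EuclideanSpace ℝ (Fin d) => ϑ ((Real.sqrt t)⁻¹ • (p.2 - (2 * t) • p.1)) :=
    ϑ.continuous.comp (((continuous_snd.sub (continuous_fst.const_smul (2 * t))).const_smul (Real.sqrt t)⁻¹))
  have hKjoint : Measurable fun p : EuclideanSpace ℝ (Fin d) × EuclideanSpace ℝ (Fin d) => K p.1 p.2 := hKc.measurable.enorm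
  have hKx : ∀ v, Measurable (K v) := fun v =>
    (ϑ.continuous.comp ((continuous_id.sub (continuous_const : Continuous fun _ : EuclideanSpace ℝ (Fin d) => (2 * t) • v)).const_smul (Real.sqrt t)⁻¹)).measurable.enorm
  -- norm of the wave packet
  have hexp : ∀ c : ℝ, ‖Complex.exp (Complex.I * (c : ℂ))‖₊ = 1 := by
    intro c
    refine NNReal.coe_injective ?_
    simp [coe_nnnorm, Complex.norm_exp]
  have hnorm : ∀ v x, (‖u x * (starRingEnd ℂ) (wavePacket ϑ v t x)‖₊ : ℝ≥0∞)
      = (‖u x‖₊ : ℝ≥0∞) * K v x := by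
    intro v x
    rw [nnnorm_mul, RCLike.nnnorm_conj, wavePacket, nnnorm_mul, hexp, one_mul,
      ENNReal.coe_mul]
  -- pointwise bound on gam
  have hpt : ∀ v, (‖gam ϑ t u v‖₊ : ℝ≥0∞) ≤ ∫⁻ x, (‖u x‖₊ : ℝ≥0∞) * K v x := by
    intro v
    refine (enorm_integral_le_lintegral_enorm _).trans_eq ?_
    exact lintegral_congr fun x => hnorm v x
  -- measurability of gam
  have hwpc : Continuous fun p : EuclideanSpace ℝ (Fin d) × EuclideanSpace ℝ (Fin d) => (starRingEnd ℂ) (wavePacket ϑ p.1 t p.2) := by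
    refine Complex.continuous_conj.comp ?_
    refine Continuous.mul ?_ hKc
    exact Complex.continuous_exp.comp (continuous_const.mul
      (Complex.continuous_ofReal.comp
        (((continuous_snd.norm.pow 2).div_const _))))
  have hmeasγ : AEStronglyMeasurable (fun v => gam ϑ t u v) volume := by
    have h2 : AEStronglyMeasurable (fun p : EuclideanSpace ℝ (Fin d) × EuclideanSpace ℝ (Fin d) => u p.2)
        ((volume : Measure (EuclideanSpace ℝ (Fin d))).prod (volume : Measure (EuclideanSpace ℝ (Fin d)))) :=
      hu.1.comp_quasiMeasurePreserving
        (Measure.quasiMeasurePreserving_snd (μ := (volume : Measure (EuclideanSpace ℝ (Fin d))))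
          (ν := (volume : Measure (EuclideanSpace ℝ (Fin d)))))
    exact (h2.mul hwpc.aestronglyMeasurable).integral_prod_right'
  have huae : AEMeasurable (fun x => (‖u x‖₊ : ℝ≥0∞)) volume := hu.1.enorm
  -- main quadratic bound
  have hmain : ∫⁻ v, (‖gam ϑ t u v‖₊ : ℝ≥0∞) ^ (2 : ℝ)
      ≤ A * B * ∫⁻ x, (‖u x‖₊ : ℝ≥0∞) ^ (2 : ℝ) := by
    have huae2 : AEMeasurable (fun p : EuclideanSpace ℝ (Fin d) × EuclideanSpace ℝ (Fin d) => (‖u p.2‖₊ : ℝ≥0∞) ^ (2 : ℝ) * K p.1 p.2)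
        ((volume : Measure (EuclideanSpace ℝ (Fin d))).prod (volume : Measure (EuclideanSpace ℝ (Fin d)))) :=
      (((huae.comp_quasiMeasurePreserving
          (Measure.quasiMeasurePreserving_snd (μ := (volume : Measure (EuclideanSpace ℝ (Fin d))))
            (ν := (volume : Measure (EuclideanSpace ℝ (Fin d)))))) : AEMeasurable (fun p : EuclideanSpace ℝ (Fin d) × EuclideanSpace ℝ (Fin d) => (‖u p.2‖₊ : ℝ≥0∞))
          ((volume : Measure (EuclideanSpace ℝ (Fin d))).prod (volume : Measure (EuclideanSpace ℝ (Fin d))))).pow_const _).mul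
        hKjoint.aemeasurable
    calc ∫⁻ v, (‖gam ϑ t u v‖₊ : ℝ≥0∞) ^ (2 : ℝ)
        ≤ ∫⁻ v, (∫⁻ x, (‖u x‖₊ : ℝ≥0∞) * K v x) ^ (2 : ℝ) :=
          lintegral_mono fun v => ENNReal.rpow_le_rpow (hpt v) (by norm_num)
      _ ≤ ∫⁻ v, (∫⁻ x, (‖u x‖₊ : ℝ≥0∞) ^ (2 : ℝ) * K v x) * ∫⁻ x, K v x :=
          lintegral_mono fun v => cs_step volume _ _ huae (hKx v).aemeasurable
      _ = ∫⁻ v, A * ∫⁻ x, (‖u x‖₊ : ℝ≥0∞) ^ (2 : ℝ) * K v x := by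
          refine lintegral_congr fun v => ?_
          rw [hA v, mul_comm]
      _ = A * ∫⁻ v, ∫⁻ x, (‖u x‖₊ : ℝ≥0∞) ^ (2 : ℝ) * K v x :=
          lintegral_const_mul' _ _ hAne
      _ = A * ∫⁻ x, ∫⁻ v, (‖u x‖₊ : ℝ≥0∞) ^ (2 : ℝ) * K v x := by
          rw [lintegral_lintegral_swap huae2]
      _ = A * ∫⁻ x, (‖u x‖₊ : ℝ≥0∞) ^ (2 : ℝ) * B := by
          congr 1
          refine lintegral_congr fun x => ?_
          rw [lintegral_const_mul' _ _ (by
            exact ENNReal.rpow_ne_top_of_nonneg (by norm_num) ENNReal.coe_ne_top), hB x]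
      _ = A * (B * ∫⁻ x, (‖u x‖₊ : ℝ≥0∞) ^ (2 : ℝ)) := by
          congr 1
          simp_rw [mul_comm ((_ : ℝ≥0∞) ^ (2:ℝ)) B]
          exact lintegral_const_mul' _ _ hBne
      _ = A * B * ∫⁻ x, (‖u x‖₊ : ℝ≥0∞) ^ (2 : ℝ) := by ring
  -- pass to eLpNorms
  have h2 : ((2 : ℝ≥0∞)).toReal = (2 : ℝ) := by norm_num
  have hsn : eLpNorm (fun v => gam ϑ t u v) 2 volume
      ≤ (A * B) ^ (1 / 2 : ℝ) * eLpNorm u 2 volume := by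
    rw [eLpNorm_eq_lintegral_rpow_enorm_toReal two_ne_zero ENNReal.ofNat_ne_top,
      eLpNorm_eq_lintegral_rpow_enorm_toReal two_ne_zero ENNReal.ofNat_ne_top, h2]
    calc (∫⁻ v, (‖gam ϑ t u v‖₊ : ℝ≥0∞) ^ (2 : ℝ)) ^ (1 / 2 : ℝ)
        ≤ (A * B * ∫⁻ x, (‖u x‖₊ : ℝ≥0∞) ^ (2 : ℝ)) ^ (1 / 2 : ℝ) :=
          ENNReal.rpow_le_rpow hmain (by norm_num)
      _ = (A * B) ^ (1 / 2 : ℝ) * (∫⁻ x, (‖u x‖₊ : ℝ≥0∞) ^ (2 : ℝ)) ^ (1 / 2 : ℝ) :=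
          ENNReal.mul_rpow_of_nonneg _ _ (by norm_num)
  -- compute the constant
  have hconst : (A * B) ^ (1 / 2 : ℝ) = ENNReal.ofReal ((2 : ℝ) ^ (-(d : ℝ) / 2)) * I := by
    have hab : A * B = ENNReal.ofReal (((2 : ℝ)⁻¹) ^ d) * (I * I) := by
      rw [hAdef, hBdef]
      rw [show ENNReal.ofReal (Real.sqrt t ^ d) * I * (ENNReal.ofReal ((2 * Real.sqrt t)⁻¹ ^ d) * I)
          = ENNReal.ofReal (Real.sqrt t ^ d) * ENNReal.ofReal ((2 * Real.sqrt t)⁻¹ ^ d) * (I * I)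
          by ring]
      rw [← ENNReal.ofReal_mul (by positivity), ← mul_pow]
      congr 3
      field_simp
    rw [hab, ENNReal.mul_rpow_of_nonneg _ _ (by norm_num),
      ENNReal.ofReal_rpow_of_nonneg (by positivity) (by norm_num)]
    congr 1
    · congr 1
      rw [inv_pow, ← Real.rpow_natCast (2:ℝ) d, ← Real.rpow_neg (by norm_num),
        ← Real.rpow_mul (by norm_num)]
      congr 1
      ring
    · rw [show I * I = I ^ (2:ℝ) by
        rw [show (2:ℝ) = 1 + 1 by norm_num, ENNReal.rpow_add_of_nonneg _ _ zero_le_one zero_le_one,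
          ENNReal.rpow_one]]
      rw [← ENNReal.rpow_mul]
      norm_num
  rw [hconst] at hsn
  have hRne : ENNReal.ofReal ((2 : ℝ) ^ (-(d : ℝ) / 2)) * I * eLpNorm u 2 volume ≠ ⊤ :=
    ENNReal.mul_ne_top (ENNReal.mul_ne_top ENNReal.ofReal_ne_top hIlt.ne) hu.2.ne
  have hle : eLpNorm (fun v => gam ϑ t u v) 2 volume
      ≤ ENNReal.ofReal ((2 : ℝ) ^ (-(d : ℝ) / 2)) * I * eLpNorm u 2 volume := hsn
  refine ⟨⟨hmeasγ, lt_of_le_of_lt hle (lt_top_iff_ne_top.mpr hRne)⟩, ?_⟩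
  have := ENNReal.toReal_mono hRne hle
  refine this.trans (le_of_eq ?_)
  rw [ENNReal.toReal_mul, ENNReal.toReal_mul, ENNReal.toReal_ofReal (by positivity)]
  congr 2
  rw [hI, integral_norm_eq_lintegral_enorm (ϑ.continuous.aestronglyMeasurable)]
  rfl
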